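/- arXiv:1608.07496 — 3 statements merged into one kernel-verified Lean document; each statement's English description precedes it below -/
import Mathlib

section
/- Let G : ℝ^d → ℝ be Lebesgue integrable and let Λ ⊂ ℝ^d be a Borel set with 0 < |Λ| < ∞. For R > 0 let Λ_R := {R·x : x ∈ Λ}, so |Λ_R| = R^d·|Λ|. Then lim_{R → ∞} (1/|Λ_R|) ∫_{Λ_R} ∫_{Λ_R} G(x-y) dy dx = ∫_{ℝ^d} G(x) dx. -/
set_option maxHeartbeats 1000000

open MeasureTheory Filter Set
open scoped Pointwise ENNReal symmDiff Topology

section Aux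

variable {d : ℕ}

local notation "E" => EuclideanSpace ℝ (Fin d)

/-- Measurability of the overlap function `z ↦ |S ∩ (S + z)|`. -/
lemma overlap_measurable (S : Set E) (hS : MeasurableSet S) :
    Measurable (fun z : E => volume (S ∩ (fun x => x - z) ⁻¹' S)) := by
  have h1 : ∀ z : E, volume (S ∩ (fun x => x - z) ⁻¹' S)
      = ∫⁻ x, S.indicator 1 x * S.indicator 1 (x - z) := by
    intro z
    have hpre : MeasurableSet ((fun x : E => x - z) ⁻¹' S) :=
      (measurable_sub_const z) hS
    rw [← lintegral_indicator_one (hS.inter hpre)]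
    refine lintegral_congr fun x => ?_
    by_cases hx : x ∈ S <;> by_cases hx' : x - z ∈ S <;>
      simp [Set.indicator_apply, hx, hx', Set.mem_preimage]
  simp only [h1]
  refine Measurable.lintegral_prod_right (f := fun z x => S.indicator 1 x * S.indicator 1 (x - z)) ?_
  exact ((measurable_one.indicator hS).comp measurable_snd).mul
    ((measurable_one.indicator hS).comp (measurable_snd.sub measurable_fst))

/-- Key identity: the double integral over `S` equals the integral of `G` weighted by the
overlap function. -/
lemma double_integral_eq (S : Set E) (hS : MeasurableSet S) (hSfin : volume S < ⊤)
    (G : E → ℝ) (hG : Integrable G) :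
    ∫ x in S, ∫ y in S, G (x - y)
      = ∫ z, (volume (S ∩ (fun x => x - z) ⁻¹' S)).toReal * G z := by
  set I : E → ℝ := S.indicator (fun _ => (1:ℝ)) with hI_def
  have hImeas : Measurable I := measurable_const.indicator hS
  have hIint : Integrable I := by
    rw [hI_def, integrable_indicator_iff hS]
    exact integrableOn_const hSfin.ne
  -- inner substitution
  have hinner : ∀ x : E, ∫ y in S, G (x - y) = ∫ z, I (x - z) * G z := by
    intro x
    have h := integral_sub_left_eq_self (fun z => I (x - z) * G z) volume x
    rw [← h, ← integral_indicator hS]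
    refine integral_congr_ae (Filter.EventuallyEq.of_eq (funext fun y => ?_))
    rw [sub_sub_cancel]
    by_cases hy : y ∈ S <;> simp [hI_def, Set.indicator_apply, hy]
  -- product integrability
  have hprod : Integrable (Function.uncurry fun x z => I x * (I (x - z) * G z))
      (volume.prod volume) := by
    have hB : Integrable (fun p : E × E => I p.1 * ‖G p.2‖) (volume.prod volume) :=
      hIint.mul_prod hG.norm
    refine hB.mono' ?_ ?_
    · exact (((hImeas.comp measurable_fst).aestronglyMeasurable).mul
        (((hImeas.comp (measurable_fst.sub measurable_snd)).aestronglyMeasurable).mul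
          hG.1.comp_snd))
    · refine Filter.Eventually.of_forall fun p => ?_
      by_cases h1 : p.1 ∈ S <;> by_cases h2 : p.1 - p.2 ∈ S <;>
        simp [Function.uncurry, hI_def, Set.indicator_apply, h1, h2, abs_mul,
          norm_nonneg, abs_norm]
  calc ∫ x in S, ∫ y in S, G (x - y)
      = ∫ x in S, ∫ z, I (x - z) * G z := by
        exact integral_congr_ae (Filter.EventuallyEq.of_eq (funext fun x => hinner x))
    _ = ∫ x, I x * ∫ z, I (x - z) * G z := by
        rw [← integral_indicator hS]
        refine integral_congr_ae (Filter.EventuallyEq.of_eq (funext fun x => ?_))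
        by_cases hx : x ∈ S <;> simp [hI_def, Set.indicator_apply, hx]
    _ = ∫ x, ∫ z, I x * (I (x - z) * G z) := by
        refine integral_congr_ae (Filter.EventuallyEq.of_eq (funext fun x => ?_))
        rw [integral_const_mul]
    _ = ∫ z, ∫ x, I x * (I (x - z) * G z) := integral_integral_swap hprod
    _ = ∫ z, (volume (S ∩ (fun x => x - z) ⁻¹' S)).toReal * G z := by
        refine integral_congr_ae (Filter.EventuallyEq.of_eq (funext fun z => ?_))
        have hpre : MeasurableSet ((fun x : E => x - z) ⁻¹' S) :=
          (measurable_sub_const z) hS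
        have : ∀ x : E, I x * (I (x - z) * G z)
            = ((S ∩ (fun x => x - z) ⁻¹' S).indicator (fun _ => (1:ℝ)) x) * G z := by
          intro x
          by_cases hx : x ∈ S <;> by_cases hx' : x - z ∈ S <;>
            simp [hI_def, Set.indicator_apply, hx, hx', Set.mem_preimage]
        simp only [this]
        rw [integral_mul_const, integral_indicator_const (1:ℝ) (hS.inter hpre),
          smul_eq_mul, mul_one, measureReal_def]

/-- Continuity at `0` of overlap: `|Λ ∩ (Λ + w)| → |Λ|` as `w → 0`. -/
lemma overlap_tendsto (Λ : Set E) (hΛ : MeasurableSet Λ) (hΛfin : volume Λ < ⊤) :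
    Tendsto (fun w : E => (volume (Λ ∩ (fun x => x - w) ⁻¹' Λ)).toReal) (𝓝 0)
      (𝓝 (volume Λ).toReal) := by
  -- symmetric difference tends to zero
  have hsym : Tendsto (fun w : E => volume (((fun x : E => x - w) ⁻¹' Λ) ∆ Λ)) (𝓝 0) (𝓝 0) := by
    have hfc : Continuous (fun w : E => ContinuousMap.mk (fun x : E => x - w)
        (continuous_id.sub continuous_const)) := by
      apply ContinuousMap.continuous_of_continuous_uncurry
      exact continuous_snd.sub continuous_fst
    have h0 : (ContinuousMap.mk (fun x : E => x - (0:E))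
        (continuous_id.sub continuous_const)) = ContinuousMap.id E := by
      ext x; simp
    have hfg : Tendsto (fun w : E => ContinuousMap.mk (fun x : E => x - w)
        (continuous_id.sub continuous_const)) (𝓝 0) (𝓝 (ContinuousMap.id E)) := by
      have := hfc.tendsto 0
      rwa [h0] at this
    have H := tendsto_measure_symmDiff_preimage_nhds_zero (μ := (volume : Measure E))
      (ν := (volume : Measure E)) hfg
      (Filter.Eventually.of_forall fun w => measurePreserving_sub_right volume w)
      (MeasurePreserving.id volume) hΛ.nullMeasurableSet hΛfin.ne
    simpa using H
  have hsymR : Tendsto (fun w : E => (volume (((fun x : E => x - w) ⁻¹' Λ) ∆ Λ)).toReal)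
      (𝓝 0) (𝓝 0) := by
    have := (ENNReal.tendsto_toReal (a := 0) (by simp)).comp hsym
    exact this
  have hfinpre : ∀ w : E, volume ((fun x : E => x - w) ⁻¹' Λ) = volume Λ := fun w =>
    (measurePreserving_sub_right volume w).measure_preimage hΛ.nullMeasurableSet
  have hub : ∀ w : E, (volume (Λ ∩ (fun x => x - w) ⁻¹' Λ)).toReal ≤ (volume Λ).toReal := by
    intro w
    exact ENNReal.toReal_mono hΛfin.ne (measure_mono Set.inter_subset_left)
  have hlb : ∀ w : E, (volume Λ).toReal - (volume (((fun x : E => x - w) ⁻¹' Λ) ∆ Λ)).toReal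
      ≤ (volume (Λ ∩ (fun x => x - w) ⁻¹' Λ)).toReal := by
    intro w
    have hsub : Λ ⊆ (Λ ∩ (fun x => x - w) ⁻¹' Λ) ∪ (((fun x : E => x - w) ⁻¹' Λ) ∆ Λ) := by
      intro x hx
      by_cases hx' : x ∈ (fun x : E => x - w) ⁻¹' Λ
      · exact Or.inl ⟨hx, hx'⟩
      · exact Or.inr (Or.inr ⟨hx, hx'⟩)
    have hle : volume Λ ≤ volume (Λ ∩ (fun x => x - w) ⁻¹' Λ)
        + volume (((fun x : E => x - w) ⁻¹' Λ) ∆ Λ) :=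
      le_trans (measure_mono hsub) (measure_union_le _ _)
    have hfin1 : volume (Λ ∩ (fun x => x - w) ⁻¹' Λ) ≠ ⊤ :=
      (lt_of_le_of_lt (measure_mono Set.inter_subset_left) hΛfin).ne
    have hfin2 : volume (((fun x : E => x - w) ⁻¹' Λ) ∆ Λ) ≠ ⊤ := by
      have hle2 : volume (((fun x : E => x - w) ⁻¹' Λ) ∆ Λ)
          ≤ volume ((fun x : E => x - w) ⁻¹' Λ) + volume Λ :=
        le_trans (measure_mono symmDiff_subset_union) (measure_union_le _ _)
      exact (lt_of_le_of_lt hle2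
        (by rw [hfinpre w]; exact ENNReal.add_lt_top.2 ⟨hΛfin, hΛfin⟩)).ne
    have := ENNReal.toReal_le_add hle hfin1 hfin2
    linarith
  refine tendsto_of_tendsto_of_tendsto_of_le_of_le
    (g := fun w : E => (volume Λ).toReal - (volume (((fun x : E => x - w) ⁻¹' Λ) ∆ Λ)).toReal)
    (h := fun _ : E => (volume Λ).toReal) ?_ tendsto_const_nhds hlb hub
  have := tendsto_const_nhds (x := (volume Λ).toReal) (f := 𝓝 (0:E)) |>.sub hsymR
  simpa using this

end Aux

/-- For integrable `G` and a Borel set `Λ` with `0 < |Λ| < ∞`, the normalized double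
integral `(1/|Λ_R|) ∫_{Λ_R} ∫_{Λ_R} G(x-y) dy dx` over the dilates `Λ_R = R·Λ`
converges to `∫ G` as `R → ∞`. -/
theorem normalized_variance_tendsto_integral
    {d : ℕ} (G : EuclideanSpace ℝ (Fin d) → ℝ) (hG : Integrable G)
    (Λ : Set (EuclideanSpace ℝ (Fin d))) (hΛ : MeasurableSet Λ)
    (hΛpos : 0 < volume Λ) (hΛfin : volume Λ < ⊤) :
    Tendsto
      (fun R : ℝ =>
        (∫ x in R • Λ, ∫ y in R • Λ, G (x - y)) / (volume (R • Λ)).toReal)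
      atTop (nhds (∫ x, G x)) := by
  classical
  set c : ℝ := (volume Λ).toReal with hc_def
  have hc : 0 < c := ENNReal.toReal_pos hΛpos.ne' hΛfin.ne
  -- the rescaled overlap ratio
  set F : ℝ → EuclideanSpace ℝ (Fin d) → ℝ := fun R z =>
    ((volume (Λ ∩ (fun x => x - R⁻¹ • z) ⁻¹' Λ)).toReal / c) * G z with hF_def
  -- Scaling identity for the intersections
  have hscale : ∀ R : ℝ, R ≠ 0 → ∀ z : EuclideanSpace ℝ (Fin d),
      (R • Λ) ∩ (fun x => x - z) ⁻¹' (R • Λ)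
        = R • (Λ ∩ (fun x => x - R⁻¹ • z) ⁻¹' Λ) := by
    intro R hR z
    ext x
    simp only [Set.mem_inter_iff, Set.mem_preimage,
      Set.mem_smul_set_iff_inv_smul_mem₀ hR, smul_sub]
  -- Step 1: eventual equality
  have hev : ∀ᶠ R : ℝ in atTop,
      (∫ x in R • Λ, ∫ y in R • Λ, G (x - y)) / (volume (R • Λ)).toReal
        = ∫ z, F R z := by
    filter_upwards [eventually_ge_atTop (1:ℝ)] with R hR
    have hR0 : (0:ℝ) < R := lt_of_lt_of_le one_pos hR
    have hRne : R ≠ 0 := hR0.ne'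
    have hSmeas : MeasurableSet (R • Λ) := hΛ.const_smul_of_ne_zero hRne
    have hvol : ∀ s : Set (EuclideanSpace ℝ (Fin d)), volume (R • s)
        = ENNReal.ofReal (|R| ^ d) * volume s := by
      intro s
      rw [Measure.addHaar_smul]
      congr 2
      rw [abs_pow, finrank_euclideanSpace_fin]
    have hfactor_pos : (0:ℝ) < |R| ^ d := pow_pos (abs_pos.2 hRne) d
    have hSfin : volume (R • Λ) < ⊤ := by
      rw [hvol]
      exact ENNReal.mul_lt_top ENNReal.ofReal_lt_top hΛfin
    rw [double_integral_eq (R • Λ) hSmeas hSfin G hG]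
    rw [← integral_div]
    refine integral_congr_ae (Filter.EventuallyEq.of_eq (funext fun z => ?_))
    rw [hF_def]
    have h1 : volume ((R • Λ) ∩ (fun x => x - z) ⁻¹' (R • Λ))
        = ENNReal.ofReal (|R| ^ d) * volume (Λ ∩ (fun x => x - R⁻¹ • z) ⁻¹' Λ) := by
      rw [hscale R hRne z, hvol]
    rw [h1, hvol Λ]
    rw [ENNReal.toReal_mul, ENNReal.toReal_mul, ENNReal.toReal_ofReal hfactor_pos.le]
    rw [mul_comm, mul_div_assoc, mul_div_mul_left _ _ hfactor_pos.ne']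
    ring
  -- Step 2: dominated convergence
  have hmain : Tendsto (fun R : ℝ => ∫ z, F R z) atTop (𝓝 (∫ x, G x)) := by
    apply tendsto_integral_filter_of_dominated_convergence (bound := fun z => ‖G z‖)
    · refine Filter.Eventually.of_forall fun R => ?_
      have hm : Measurable (fun z : EuclideanSpace ℝ (Fin d) =>
          (volume (Λ ∩ (fun x => x - R⁻¹ • z) ⁻¹' Λ)).toReal / c) := by
        have := (overlap_measurable Λ hΛ).comp (measurable_const_smul (R⁻¹ : ℝ))
        exact (this.ennreal_toReal).div_const c
      exact hm.aestronglyMeasurable.mul hG.1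
    · refine Filter.Eventually.of_forall fun R => Filter.Eventually.of_forall fun z => ?_
      rw [hF_def]
      have h0 : (0:ℝ) ≤ (volume (Λ ∩ (fun x => x - R⁻¹ • z) ⁻¹' Λ)).toReal / c :=
        div_nonneg ENNReal.toReal_nonneg hc.le
      have h1 : (volume (Λ ∩ (fun x => x - R⁻¹ • z) ⁻¹' Λ)).toReal / c ≤ 1 := by
        rw [div_le_one hc]
        exact ENNReal.toReal_mono hΛfin.ne (measure_mono Set.inter_subset_left)
      rw [norm_mul]
      calc ‖(volume (Λ ∩ (fun x => x - R⁻¹ • z) ⁻¹' Λ)).toReal / c‖ * ‖G z‖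
          ≤ 1 * ‖G z‖ := by
            apply mul_le_mul_of_nonneg_right _ (norm_nonneg _)
            rw [Real.norm_eq_abs, abs_of_nonneg h0]
            exact h1
        _ = ‖G z‖ := one_mul _
    · exact hG.norm
    · refine Filter.Eventually.of_forall fun z => ?_
      have hzero : Tendsto (fun R : ℝ => R⁻¹ • z) atTop (𝓝 (0:EuclideanSpace ℝ (Fin d))) := by
        have := tendsto_inv_atTop_zero (𝕜 := ℝ) |>.smul_const z
        simpa using this
      have hcomp : Tendsto (fun R : ℝ =>
          (volume (Λ ∩ (fun x => x - R⁻¹ • z) ⁻¹' Λ)).toReal) atTop (𝓝 c) :=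
        (overlap_tendsto Λ hΛ hΛfin).comp hzero
      have : Tendsto (fun R : ℝ => F R z) atTop (𝓝 (c / c * G z)) :=
        (hcomp.div_const c).mul_const (G z)
      rwa [div_self hc.ne', one_mul] at this
  exact hmain.congr' (hev.mono fun R h => h.symm)
end

section
/- Let d ≥ 1, let B_R ⊂ ℝ^d denote the closed Euclidean ball of radius R centered at the origin, and let ω_{d-1} denote the Lebesgue measure of the unit ball in ℝ^{d-1} (with the convention ω_0 = 1 when d = 1). Then for every x ∈ ℝ^d, lim_{R → ∞} R^{-(d-1)}·( |B_R| - |B_R ∩ (B_R + x)| ) = ω_{d-1}·|x|, where B_R + x is the translate of B_R by x and |x| is the Euclidean norm of x. -/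
open MeasureTheory Filter Metric
open scoped RealInnerProductSpace ENNReal Topology
set_option maxHeartbeats 1000000

private lemma euclid_norm_sq_eq_sum {m : ℕ} (y : EuclideanSpace ℝ (Fin m)) :
    ‖y‖ ^ 2 = ∑ i, y i ^ 2 := by
  rw [EuclideanSpace.norm_eq, Real.sq_sqrt (by positivity)]
  simp [sq_abs]

private lemma vol_diff_eq_slab {d : ℕ} (x : EuclideanSpace ℝ (Fin d)) (R : ℝ) :
    volume (closedBall (0 : EuclideanSpace ℝ (Fin d)) R \ closedBall x R)
      = volume (closedBall (0 : EuclideanSpace ℝ (Fin d)) R ∩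
          {y | -(‖x‖ ^ 2 / 2) < ⟪x, y⟫ ∧ ⟪x, y⟫ ≤ ‖x‖ ^ 2 / 2}) := by
  classical
  have hcont : Continuous fun y : EuclideanSpace ℝ (Fin d) => ⟪x, y⟫ :=
    continuous_const.inner continuous_id
  set s : ℝ := ‖x‖ ^ 2 with hs_def
  set B : Set (EuclideanSpace ℝ (Fin d)) := closedBall 0 R with hB_def
  set Bx : Set (EuclideanSpace ℝ (Fin d)) := closedBall x R with hBx_def
  set H : Set (EuclideanSpace ℝ (Fin d)) := {y | ⟪x, y⟫ ≤ s / 2} with hH_def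
  set H' : Set (EuclideanSpace ℝ (Fin d)) := {y | ⟪x, y⟫ ≤ -(s / 2)} with hH'_def
  have hHm : MeasurableSet H := measurableSet_le hcont.measurable measurable_const
  have hH'm : MeasurableSet H' := measurableSet_le hcont.measurable measurable_const
  have hBm : MeasurableSet B := measurableSet_closedBall
  have hBxm : MeasurableSet Bx := measurableSet_closedBall
  have hBfin : volume B ≠ ⊤ := measure_closedBall_lt_top.ne
  have hBxfin : volume Bx ≠ ⊤ := measure_closedBall_lt_top.ne
  have key1 : Bx ∩ H ⊆ B := by
    rintro y ⟨hy, hyH⟩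
    have h1 : ‖y - x‖ ≤ R := by simpa [hBx_def, mem_closedBall_iff_norm, dist_eq_norm] using hy
    have h4 : ⟪x, y⟫ ≤ s / 2 := hyH
    have h2 : ‖y‖ ^ 2 ≤ ‖y - x‖ ^ 2 := by
      have h5 := norm_sub_sq_real y x
      have h3 : ⟪y, x⟫ = ⟪x, y⟫ := real_inner_comm x y
      nlinarith
    have h6 : ‖y‖ ≤ ‖y - x‖ := by
      have := Real.sqrt_le_sqrt h2
      rwa [Real.sqrt_sq (norm_nonneg _), Real.sqrt_sq (norm_nonneg _)] at this
    simpa [hB_def, mem_closedBall_zero_iff] using h6.trans h1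
  have key2 : B \ H ⊆ Bx := by
    rintro y ⟨hy, hyH⟩
    have h0 : s / 2 < ⟪x, y⟫ := not_le.mp hyH
    have h1 : ‖y‖ ≤ R := by simpa [hB_def, mem_closedBall_zero_iff] using hy
    have h2 : ‖y - x‖ ^ 2 ≤ ‖y‖ ^ 2 := by
      have h5 := norm_sub_sq_real y x
      have h3 : ⟪y, x⟫ = ⟪x, y⟫ := real_inner_comm x y
      nlinarith
    have h6 : ‖y - x‖ ≤ ‖y‖ := by
      have := Real.sqrt_le_sqrt h2
      rwa [Real.sqrt_sq (norm_nonneg _), Real.sqrt_sq (norm_nonneg _)] at this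
    simpa [hBx_def, mem_closedBall_iff_norm, dist_eq_norm] using h6.trans h1
  have hsub' : H' ⊆ H := by
    intro y hy
    have hs0 : 0 ≤ s := sq_nonneg _
    have : ⟪x, y⟫ ≤ -(s/2) := hy
    show ⟪x, y⟫ ≤ s / 2
    linarith
  have e1 : B \ Bx = (B ∩ H) \ (Bx ∩ H) := by
    ext y
    constructor
    · rintro ⟨hB, hBx⟩
      have hyH : y ∈ H := by
        by_contra h
        exact hBx (key2 ⟨hB, h⟩)
      exact ⟨⟨hB, hyH⟩, fun h => hBx h.1⟩
    · rintro ⟨⟨hB, hH⟩, hn⟩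
      exact ⟨hB, fun hBx => hn ⟨hBx, hH⟩⟩
  have e2 : (fun y : EuclideanSpace ℝ (Fin d) => y + x) ⁻¹' (Bx ∩ H) = B ∩ H' := by
    ext y
    simp only [Set.mem_preimage, Set.mem_inter_iff, hBx_def, hB_def, hH_def, hH'_def,
      mem_closedBall_iff_norm, mem_closedBall_zero_iff, Set.mem_setOf_eq, sub_zero,
      add_sub_cancel_right, inner_add_right, real_inner_self_eq_norm_sq]
    constructor
    · rintro ⟨h1, h2⟩; exact ⟨h1, by rw [hs_def] at h2 ⊢; linarith⟩
    · rintro ⟨h1, h2⟩; exact ⟨h1, by rw [hs_def] at h2 ⊢; linarith⟩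
  have e3 : volume (Bx ∩ H) = volume (B ∩ H') := by
    rw [← measure_preimage_add_right volume x (Bx ∩ H), e2]
  have e4 : (B ∩ H) \ (B ∩ H') = B ∩ {y | -(s / 2) < ⟪x, y⟫ ∧ ⟪x, y⟫ ≤ s / 2} := by
    ext y
    constructor
    · rintro ⟨⟨hB, hH⟩, hn⟩
      refine ⟨hB, ?_, hH⟩
      by_contra h
      exact hn ⟨hB, not_lt.mp h⟩
    · rintro ⟨hB, h1, h2⟩
      exact ⟨⟨hB, h2⟩, fun h => absurd h.2 (not_le.mpr h1)⟩
  calc volume (B \ Bx) = volume ((B ∩ H) \ (Bx ∩ H)) := by rw [e1]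
    _ = volume (B ∩ H) - volume (Bx ∩ H) :=
        measure_diff (fun y hy => ⟨key1 hy, hy.2⟩) ((hBxm.inter hHm).nullMeasurableSet)
          (ne_top_of_le_ne_top hBxfin (measure_mono Set.inter_subset_left))
    _ = volume (B ∩ H) - volume (B ∩ H') := by rw [e3]
    _ = volume ((B ∩ H) \ (B ∩ H')) :=
        (measure_diff (Set.inter_subset_inter_right B hsub') ((hBm.inter hH'm).nullMeasurableSet)
          (ne_top_of_le_ne_top hBfin (measure_mono Set.inter_subset_left))).symm
    _ = _ := by rw [e4]

private lemma vol_slab_rotate {n : ℕ} {x : EuclideanSpace ℝ (Fin (n + 1))} (hx : x ≠ 0) (R : ℝ) :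
    volume (closedBall (0 : EuclideanSpace ℝ (Fin (n + 1))) R ∩
        {y | -(‖x‖ ^ 2 / 2) < ⟪x, y⟫ ∧ ⟪x, y⟫ ≤ ‖x‖ ^ 2 / 2})
      = volume (closedBall (0 : EuclideanSpace ℝ (Fin (n + 1))) R ∩
          {w | -(‖x‖ / 2) < w 0 ∧ w 0 ≤ ‖x‖ / 2}) := by
  classical
  have hcont : Continuous fun y : EuclideanSpace ℝ (Fin (n + 1)) => ⟪x, y⟫ :=
    continuous_const.inner continuous_id
  set t : ℝ := ‖x‖ with ht_def
  have ht : 0 < t := norm_pos_iff.mpr hx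
  set u : EuclideanSpace ℝ (Fin (n + 1)) := t⁻¹ • x with hu_def
  have hu : ‖u‖ = 1 := norm_smul_inv_norm hx
  have horth : Orthonormal ℝ (Set.restrict {(0 : Fin (n + 1))} (fun _ => u)) := by
    refine ⟨fun i => hu, ?_⟩
    intro i j hij
    exact absurd (Subtype.ext ((Set.mem_singleton_iff.mp i.2).trans
      (Set.mem_singleton_iff.mp j.2).symm)) hij
  obtain ⟨b, hb⟩ := horth.exists_orthonormalBasis_extension_of_card_eq
    (by simp [finrank_euclideanSpace_fin])
  have hb0 : b 0 = u := hb 0 rfl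
  have hxu : x = t • u := by
    rw [hu_def, smul_smul, mul_inv_cancel₀ ht.ne', one_smul]
  have hip : ∀ w : EuclideanSpace ℝ (Fin (n + 1)), ⟪x, b.repr.symm w⟫ = t * w 0 := by
    intro w
    have h1 : ⟪x, b.repr.symm w⟫ = ⟪b.repr x, w⟫ := by
      conv_lhs => rw [← b.repr.symm_apply_apply x]
      rw [b.repr.symm.inner_map_map]
    have h2 : b.repr x = t • EuclideanSpace.single 0 1 := by
      rw [hxu, LinearIsometryEquiv.map_smul, ← hb0, b.repr_self]
    rw [h1, h2, real_inner_smul_left, EuclideanSpace.inner_single_left]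
    simp
  have hset : (⇑b.repr.symm) ⁻¹' (closedBall (0 : EuclideanSpace ℝ (Fin (n + 1))) R ∩
        {y | -(t ^ 2 / 2) < ⟪x, y⟫ ∧ ⟪x, y⟫ ≤ t ^ 2 / 2})
      = closedBall (0 : EuclideanSpace ℝ (Fin (n + 1))) R ∩
          {w | -(t / 2) < w 0 ∧ w 0 ≤ t / 2} := by
    ext w
    simp only [Set.mem_preimage, Set.mem_inter_iff, mem_closedBall_zero_iff,
      LinearIsometryEquiv.norm_map, Set.mem_setOf_eq, hip]
    constructor
    · rintro ⟨h1, h2, h3⟩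
      refine ⟨h1, ?_, ?_⟩ <;> nlinarith
    · rintro ⟨h1, h2, h3⟩
      refine ⟨h1, ?_, ?_⟩ <;> nlinarith
  have hmeas : MeasurableSet (closedBall (0 : EuclideanSpace ℝ (Fin (n + 1))) R ∩
      {y | -(t ^ 2 / 2) < ⟪x, y⟫ ∧ ⟪x, y⟫ ≤ t ^ 2 / 2}) :=
    measurableSet_closedBall.inter
      ((measurableSet_lt measurable_const hcont.measurable).inter
        (measurableSet_le hcont.measurable measurable_const))
  rw [← b.measurePreserving_repr_symm.measure_preimage hmeas.nullMeasurableSet, hset]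

private lemma vol_cyl {n : ℕ} (t : ℝ) {r : ℝ} (hr : 0 ≤ r) :
    volume {y : EuclideanSpace ℝ (Fin (n + 1)) |
        (-(t / 2) < y 0 ∧ y 0 ≤ t / 2) ∧ ∑ j : Fin n, y j.succ ^ 2 ≤ r ^ 2}
      = ENNReal.ofReal t * volume (closedBall (0 : EuclideanSpace ℝ (Fin n)) r) := by
  classical
  set G : EuclideanSpace ℝ (Fin (n + 1)) ≃ᵐ ℝ × EuclideanSpace ℝ (Fin n) :=
    ((MeasurableEquiv.toLp 2 (Fin (n + 1) → ℝ)).symm.trans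
      (MeasurableEquiv.piFinSuccAbove (fun _ => ℝ) 0)).trans
      ((MeasurableEquiv.refl ℝ).prodCongr (MeasurableEquiv.toLp 2 (Fin n → ℝ)).symm.symm)
    with hG_def
  have hGmp : MeasurePreserving G volume volume :=
    (((MeasurePreserving.id volume).prod
        ((EuclideanSpace.volume_preserving_symm_measurableEquiv_toLp (Fin n)).symm)).comp
      ((volume_preserving_piFinSuccAbove (fun _ : Fin (n + 1) => ℝ) 0).comp
        (EuclideanSpace.volume_preserving_symm_measurableEquiv_toLp (Fin (n + 1)))))
  have hset : {y : EuclideanSpace ℝ (Fin (n + 1)) |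
        (-(t / 2) < y 0 ∧ y 0 ≤ t / 2) ∧ ∑ j : Fin n, y j.succ ^ 2 ≤ r ^ 2}
      = G ⁻¹' (Set.Ioc (-(t / 2)) (t / 2) ×ˢ closedBall (0 : EuclideanSpace ℝ (Fin n)) r) := by
    ext y
    have h1 : (G y).1 = y 0 := rfl
    have h2 : ∀ j, (G y).2 j = y j.succ := fun j => rfl
    have hz : ‖(G y).2‖ ^ 2 = ∑ j : Fin n, y j.succ ^ 2 := by
      rw [euclid_norm_sq_eq_sum]
      exact Finset.sum_congr rfl fun j _ => by rw [h2]
    simp only [Set.mem_setOf_eq, Set.mem_preimage, Set.mem_prod, Set.mem_Ioc,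
      mem_closedBall_zero_iff, h1]
    constructor
    · rintro ⟨⟨ha, hb⟩, hsum⟩
      refine ⟨⟨ha, hb⟩, ?_⟩
      have h3 : ‖(G y).2‖ ^ 2 ≤ r ^ 2 := by rw [hz]; exact hsum
      have := Real.sqrt_le_sqrt h3
      rwa [Real.sqrt_sq (norm_nonneg _), Real.sqrt_sq hr] at this
    · rintro ⟨⟨ha, hb⟩, hnorm⟩
      refine ⟨⟨ha, hb⟩, ?_⟩
      rw [← hz]
      exact pow_le_pow_left₀ (norm_nonneg _) hnorm 2
  rw [hset, hGmp.measure_preimage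
      ((measurableSet_Ioc.prod measurableSet_closedBall).nullMeasurableSet),
    Measure.volume_eq_prod, Measure.prod_prod, Real.volume_Ioc]
  congr 2
  ring

/-- The boundary overlap of a ball with its translate grows like the surface order:
`R^{-(d-1)}·(|B_R| - |B_R ∩ (B_R + x)|) → ω_{d-1}·‖x‖` as `R → ∞`, where `ω_{d-1}` is
the volume of the unit ball in `ℝ^{d-1}` (so `ω_0 = 1` when `d = 1`). -/
theorem ball_translate_overlap_surface_order
    {d : ℕ} (hd : 1 ≤ d) (x : EuclideanSpace ℝ (Fin d)) :
    Tendsto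
      (fun R : ℝ =>
        ((volume (Metric.closedBall (0 : EuclideanSpace ℝ (Fin d)) R)).toReal -
            (volume (Metric.closedBall (0 : EuclideanSpace ℝ (Fin d)) R ∩
              ((fun u => u + x) ''
                Metric.closedBall (0 : EuclideanSpace ℝ (Fin d)) R))).toReal) /
          R ^ (d - 1))
      atTop
      (nhds
        ((volume (Metric.closedBall (0 : EuclideanSpace ℝ (Fin (d - 1))) 1)).toReal *
          ‖x‖)) := by
  obtain ⟨n, rfl⟩ : ∃ n, d = n + 1 := ⟨d - 1, (Nat.succ_pred_eq_of_pos hd).symm⟩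
  simp only [Nat.add_sub_cancel]
  have himg : ∀ R : ℝ, ((fun u => u + x) '' closedBall (0 : EuclideanSpace ℝ (Fin (n + 1))) R)
      = closedBall x R := by
    intro R
    ext z
    constructor
    · rintro ⟨u, hu, rfl⟩
      have h1 : ‖u‖ ≤ R := mem_closedBall_zero_iff.mp hu
      have : ‖u + x - x‖ ≤ R := by simpa [add_sub_cancel_right] using h1
      exact mem_closedBall_iff_norm.mpr this
    · intro hz
      exact ⟨z - x, mem_closedBall_zero_iff.mpr (mem_closedBall_iff_norm.mp hz),
        sub_add_cancel z x⟩
  have hnum : ∀ R : ℝ,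
      (volume (closedBall (0 : EuclideanSpace ℝ (Fin (n + 1))) R)).toReal
        - (volume (closedBall (0 : EuclideanSpace ℝ (Fin (n + 1))) R ∩
            ((fun u => u + x) '' closedBall (0 : EuclideanSpace ℝ (Fin (n + 1))) R))).toReal
      = (volume (closedBall (0 : EuclideanSpace ℝ (Fin (n + 1))) R \ closedBall x R)).toReal := by
    intro R
    rw [himg R, ← Set.diff_self_inter,
      measure_diff Set.inter_subset_left
        (measurableSet_closedBall.inter measurableSet_closedBall).nullMeasurableSet
        (ne_top_of_le_ne_top measure_closedBall_lt_top.ne (measure_mono Set.inter_subset_left)),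
      ENNReal.toReal_sub_of_le (measure_mono Set.inter_subset_left)
        measure_closedBall_lt_top.ne]
  have main : Tendsto (fun R : ℝ =>
      (volume (closedBall (0 : EuclideanSpace ℝ (Fin (n + 1))) R \ closedBall x R)).toReal
        / R ^ n)
      atTop (𝓝 ((volume (closedBall (0 : EuclideanSpace ℝ (Fin n)) 1)).toReal * ‖x‖)) := by
    rcases eq_or_ne x 0 with rfl | hx
    · simp only [Set.diff_self, measure_empty, ENNReal.toReal_zero, zero_div, norm_zero,
        mul_zero]
      exact tendsto_const_nhds
    · set t : ℝ := ‖x‖ with ht_def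
      have ht : 0 < t := norm_pos_iff.mpr hx
      set ωr : ℝ := (volume (closedBall (0 : EuclideanSpace ℝ (Fin n)) 1)).toReal with hωr_def
      have hωr0 : 0 ≤ ωr := ENNReal.toReal_nonneg
      have hω_ne : volume (closedBall (0 : EuclideanSpace ℝ (Fin n)) 1) ≠ ⊤ :=
        measure_closedBall_lt_top.ne
      have hkey : ∀ R : ℝ,
          volume (closedBall (0 : EuclideanSpace ℝ (Fin (n + 1))) R \ closedBall x R)
          = volume (closedBall (0 : EuclideanSpace ℝ (Fin (n + 1))) R ∩
              {w | -(t / 2) < w 0 ∧ w 0 ≤ t / 2}) :=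
        fun R => (vol_diff_eq_slab x R).trans (vol_slab_rotate hx R)
      have hballF : ∀ r : ℝ, 0 ≤ r →
          volume (closedBall (0 : EuclideanSpace ℝ (Fin n)) r)
            = ENNReal.ofReal (r ^ n) * volume (closedBall (0 : EuclideanSpace ℝ (Fin n)) 1) := by
        intro r hr
        have h := Measure.addHaar_closedBall' (volume : Measure (EuclideanSpace ℝ (Fin n))) 0 hr
        rwa [finrank_euclideanSpace_fin] at h
      -- real-level sandwich
      have hsand : ∀ R : ℝ, max t 1 ≤ R →
          t * (Real.sqrt (R ^ 2 - t ^ 2 / 4) ^ n * ωr)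
            ≤ (volume (closedBall (0 : EuclideanSpace ℝ (Fin (n + 1))) R ∩
                {w | -(t / 2) < w 0 ∧ w 0 ≤ t / 2})).toReal
          ∧ (volume (closedBall (0 : EuclideanSpace ℝ (Fin (n + 1))) R ∩
                {w | -(t / 2) < w 0 ∧ w 0 ≤ t / 2})).toReal ≤ t * (R ^ n * ωr) := by
        intro R hR
        have hRt : t ≤ R := le_trans (le_max_left t 1) hR
        have hR1 : (1 : ℝ) ≤ R := le_trans (le_max_right t 1) hR
        have hR0 : (0 : ℝ) < R := lt_of_lt_of_le one_pos hR1
        have hsub : (0 : ℝ) ≤ R ^ 2 - t ^ 2 / 4 := by nlinarith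
        have hSfin : volume (closedBall (0 : EuclideanSpace ℝ (Fin (n + 1))) R ∩
            {w | -(t / 2) < w 0 ∧ w 0 ≤ t / 2}) ≠ ⊤ :=
          ne_top_of_le_ne_top measure_closedBall_lt_top.ne
            (measure_mono Set.inter_subset_left)
        have hupper : closedBall (0 : EuclideanSpace ℝ (Fin (n + 1))) R ∩
              {w | -(t / 2) < w 0 ∧ w 0 ≤ t / 2}
            ⊆ {y : EuclideanSpace ℝ (Fin (n + 1)) |
                (-(t / 2) < y 0 ∧ y 0 ≤ t / 2) ∧ ∑ j : Fin n, y j.succ ^ 2 ≤ R ^ 2} := by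
          rintro y ⟨hy, h0⟩
          refine ⟨h0, ?_⟩
          have h1 : ‖y‖ ≤ R := mem_closedBall_zero_iff.mp hy
          have h2 : ‖y‖ ^ 2 ≤ R ^ 2 := by nlinarith [norm_nonneg y]
          have h3 := euclid_norm_sq_eq_sum y
          have h4 : ∑ i : Fin (n + 1), y i ^ 2 = y 0 ^ 2 + ∑ j : Fin n, y j.succ ^ 2 :=
            Fin.sum_univ_succ _
          nlinarith [sq_nonneg (y 0)]
        have hlower : {y : EuclideanSpace ℝ (Fin (n + 1)) |
              (-(t / 2) < y 0 ∧ y 0 ≤ t / 2) ∧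
                ∑ j : Fin n, y j.succ ^ 2 ≤ Real.sqrt (R ^ 2 - t ^ 2 / 4) ^ 2}
            ⊆ closedBall (0 : EuclideanSpace ℝ (Fin (n + 1))) R ∩
                {w | -(t / 2) < w 0 ∧ w 0 ≤ t / 2} := by
          rintro y ⟨h0, hsum⟩
          have hs2 : Real.sqrt (R ^ 2 - t ^ 2 / 4) ^ 2 = R ^ 2 - t ^ 2 / 4 :=
            Real.sq_sqrt hsub
          have hy0 : y 0 ^ 2 ≤ (t / 2) ^ 2 := sq_le_sq' (by linarith [h0.1]) h0.2
          have h3 := euclid_norm_sq_eq_sum y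
          have h4 : ∑ i : Fin (n + 1), y i ^ 2 = y 0 ^ 2 + ∑ j : Fin n, y j.succ ^ 2 :=
            Fin.sum_univ_succ _
          have h5 : ‖y‖ ^ 2 ≤ R ^ 2 := by nlinarith
          have h6 : ‖y‖ ≤ R := by
            have h7 := Real.sqrt_le_sqrt h5
            rwa [Real.sqrt_sq (norm_nonneg _), Real.sqrt_sq hR0.le] at h7
          exact ⟨mem_closedBall_zero_iff.mpr h6, h0⟩
        constructor
        · have hlow := le_of_eq_of_le (vol_cyl t (Real.sqrt_nonneg (R ^ 2 - t ^ 2 / 4))).symm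
            (measure_mono hlower)
          have h8 := ENNReal.toReal_mono hSfin hlow
          rw [hballF _ (Real.sqrt_nonneg _), ENNReal.toReal_mul, ENNReal.toReal_mul,
            ENNReal.toReal_ofReal ht.le,
            ENNReal.toReal_ofReal (pow_nonneg (Real.sqrt_nonneg _) n)] at h8
          exact h8
        · have hup := le_trans (measure_mono hupper) (le_of_eq (vol_cyl t hR0.le))
          have hfin2 : ENNReal.ofReal t *
              volume (closedBall (0 : EuclideanSpace ℝ (Fin n)) R) ≠ ⊤ :=
            ENNReal.mul_ne_top ENNReal.ofReal_ne_top measure_closedBall_lt_top.ne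
          have h8 := ENNReal.toReal_mono hfin2 hup
          rw [hballF _ hR0.le, ENNReal.toReal_mul, ENNReal.toReal_mul,
            ENNReal.toReal_ofReal ht.le,
            ENNReal.toReal_ofReal (pow_nonneg hR0.le n)] at h8
          exact h8
      -- the sqrt ratio tends to 1
      have hsqrt : Tendsto (fun R : ℝ => Real.sqrt (R ^ 2 - t ^ 2 / 4) / R) atTop (𝓝 1) := by
        have h2 : Tendsto (fun R : ℝ => t ^ 2 / 4 / R ^ 2) atTop (𝓝 0) :=
          tendsto_const_nhds.div_atTop (tendsto_pow_atTop two_ne_zero)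
        have h1 : Tendsto (fun R : ℝ => 1 - t ^ 2 / 4 / R ^ 2) atTop (𝓝 1) := by
          have := (tendsto_const_nhds (x := (1 : ℝ)) (f := atTop)).sub h2
          simpa using this
        have h3 : Tendsto (fun R : ℝ => Real.sqrt (1 - t ^ 2 / 4 / R ^ 2)) atTop (𝓝 1) := by
          have := (Real.continuous_sqrt.tendsto 1).comp h1
          simpa [Function.comp_def] using this
        refine h3.congr' ?_
        filter_upwards [eventually_ge_atTop (max t 1)] with R hR
        have hRt : t ≤ R := le_trans (le_max_left t 1) hR
        have hR0 : (0 : ℝ) < R := lt_of_lt_of_le one_pos (le_trans (le_max_right t 1) hR)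
        have hsub : (0 : ℝ) ≤ R ^ 2 - t ^ 2 / 4 := by nlinarith
        have he : 1 - t ^ 2 / 4 / R ^ 2 = (R ^ 2 - t ^ 2 / 4) / R ^ 2 := by
          field_simp
        rw [he, Real.sqrt_div hsub, Real.sqrt_sq hR0.le]
      have hlim_lo : Tendsto
          (fun R : ℝ => t * ((Real.sqrt (R ^ 2 - t ^ 2 / 4) / R) ^ n * ωr)) atTop
          (𝓝 (t * ωr)) := by
        have := (tendsto_const_nhds (x := t) (f := atTop)).mul ((hsqrt.pow n).mul
          (tendsto_const_nhds (x := ωr)))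
        simpa using this
      have hfinal : Tendsto (fun R : ℝ =>
          (volume (closedBall (0 : EuclideanSpace ℝ (Fin (n + 1))) R ∩
            {w | -(t / 2) < w 0 ∧ w 0 ≤ t / 2})).toReal / R ^ n) atTop (𝓝 (t * ωr)) := by
        refine tendsto_of_tendsto_of_tendsto_of_le_of_le' hlim_lo tendsto_const_nhds ?_ ?_
        · filter_upwards [eventually_ge_atTop (max t 1)] with R hR
          have hR0 : (0 : ℝ) < R := lt_of_lt_of_le one_pos (le_trans (le_max_right t 1) hR)
          have hRn : (0 : ℝ) < R ^ n := pow_pos hR0 n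
          rw [le_div_iff₀ hRn]
          have he : t * ((Real.sqrt (R ^ 2 - t ^ 2 / 4) / R) ^ n * ωr) * R ^ n
              = t * (Real.sqrt (R ^ 2 - t ^ 2 / 4) ^ n * ωr) := by
            rw [div_pow]
            field_simp
          rw [he]
          exact (hsand R hR).1
        · filter_upwards [eventually_ge_atTop (max t 1)] with R hR
          have hR0 : (0 : ℝ) < R := lt_of_lt_of_le one_pos (le_trans (le_max_right t 1) hR)
          have hRn : (0 : ℝ) < R ^ n := pow_pos hR0 n
          rw [div_le_iff₀ hRn]
          calc (volume (closedBall (0 : EuclideanSpace ℝ (Fin (n + 1))) R ∩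
                {w | -(t / 2) < w 0 ∧ w 0 ≤ t / 2})).toReal
              ≤ t * (R ^ n * ωr) := (hsand R hR).2
            _ = t * ωr * R ^ n := by ring
      rw [mul_comm ωr t]
      refine hfinal.congr fun R => ?_
      rw [hkey R]
  exact main.congr fun R => by rw [← hnum R]
end

section
/- Let (Ω, 𝒜, P) be a probability space, let ℱ ⊆ 𝒜 be a sub-σ-algebra, and let Z : Ω → ℝ be square-integrable. Suppose that for every ε > 0 there exists an ℱ-measurable square-integrable random variable W with Var(Z - W) ≤ ε. Then Z = E[Z | ℱ] almost surely; in particular Z is almost surely equal to an ℱ-measurable random variable. -/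
open MeasureTheory ProbabilityTheory

/-- The abstract rigidity principle: if `Z` is square-integrable and for every `ε > 0`
there is an `ℱ`-measurable square-integrable `W` with `Var(Z - W) ≤ ε`, then
`Z = E[Z | ℱ]` almost surely; in particular `Z` is a.s. equal to an `ℱ`-measurable
random variable. -/
theorem rigidity_of_small_variance_approximation
    {Ω : Type*} {𝒜 : MeasurableSpace Ω} {P : Measure Ω} [IsProbabilityMeasure P]
    (ℱ : MeasurableSpace Ω) (hℱ : ℱ ≤ 𝒜)
    (Z : Ω → ℝ) (hZ : MemLp Z 2 P)
    (happrox : ∀ ε > (0 : ℝ), ∃ W : Ω → ℝ,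
      Measurable[ℱ] W ∧ MemLp W 2 P ∧ variance (Z - W) P ≤ ε) :
    Z =ᵐ[P] P[Z|ℱ] := by
  haveI : Fact (ℱ ≤ 𝒜) := ⟨hℱ⟩
  have hkey : ∀ ε > (0 : ℝ),
      ‖hZ.toLp Z - ↑(condExpL2 ℝ ℝ hℱ (hZ.toLp Z))‖ ^ 2 ≤ ε := by
    intro ε hε
    obtain ⟨W, hWm, hW2, hWvar⟩ := happrox ε hε
    obtain ⟨c, hc⟩ : ∃ c : ℝ, c = ∫ x, (Z - W) x ∂P := ⟨_, rfl⟩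
    have hW' : MemLp (fun x => W x + c) 2 P := hW2.add (memLp_const c)
    have hWsm : StronglyMeasurable[ℱ] W := hWm.stronglyMeasurable
    have hcsm : StronglyMeasurable[ℱ] (fun _ : Ω => c) := stronglyMeasurable_const
    have hW'meas : AEStronglyMeasurable[ℱ] (fun x => W x + c) P :=
      ⟨fun x => W x + c, hWsm.add hcsm, Filter.EventuallyEq.rfl⟩
    have hmem : hW'.toLp _ ∈ @lpMeas Ω ℝ ℝ _ _ _ ℱ 𝒜 2 P := by
      rw [mem_lpMeas_iff_aestronglyMeasurable]
      exact hW'meas.congr (hW'.coeFn_toLp).symm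
    -- projection minimality
    have hmin : ‖hZ.toLp Z - ↑(condExpL2 ℝ ℝ hℱ (hZ.toLp Z))‖
        ≤ ‖hZ.toLp Z - hW'.toLp _‖ := by
      have hm := Submodule.starProjection_minimal (U := @lpMeas Ω ℝ ℝ _ _ _ ℱ 𝒜 2 P)
        (hZ.toLp Z)
      rw [show ((condExpL2 ℝ ℝ hℱ (hZ.toLp Z) : @lpMeas Ω ℝ ℝ _ _ _ ℱ 𝒜 2 P) : Lp ℝ 2 P)
          = (@lpMeas Ω ℝ ℝ _ _ _ ℱ 𝒜 2 P).starProjection (hZ.toLp Z) from rfl, hm]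
      exact ciInf_le ⟨0, fun x ⟨y, hy⟩ => hy ▸ norm_nonneg _⟩
        (⟨_, hmem⟩ : @lpMeas Ω ℝ ℝ _ _ _ ℱ 𝒜 2 P)
    have hsub : MemLp (Z - fun x => W x + c) 2 P := hZ.sub hW'
    have heq : hZ.toLp Z - hW'.toLp _ = hsub.toLp _ := (MemLp.toLp_sub hZ hW').symm
    have hnormsq : ‖hZ.toLp Z - hW'.toLp _‖ ^ 2 = ∫ x, (Z x - (W x + c)) ^ 2 ∂P := by
      rw [heq, @norm_sq_eq_re_inner ℝ]
      have hinner : (inner ℝ (hsub.toLp _) (hsub.toLp _) : ℝ)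
          = ∫ x, (inner ℝ (hsub.toLp _ x) (hsub.toLp _ x) : ℝ) ∂P := rfl
      rw [hinner]
      have : ∫ x, (inner ℝ (hsub.toLp _ x) (hsub.toLp _ x) : ℝ) ∂P
          = ∫ x, (Z x - (W x + c)) ^ 2 ∂P := by
        apply integral_congr_ae
        filter_upwards [hsub.coeFn_toLp] with x hx
        rw [RCLike.inner_apply, hx]
        simp [sq, Pi.sub_apply]
      rw [this]
      simp
    have hvar : variance (Z - W) P = ∫ x, (Z x - (W x + c)) ^ 2 ∂P := by
      rw [variance_eq_integral (hZ.sub hW2).aestronglyMeasurable.aemeasurable, ← hc]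
      apply integral_congr_ae
      filter_upwards with x
      simp only [Pi.sub_apply, Pi.pow_apply]
      ring
    calc ‖hZ.toLp Z - ↑(condExpL2 ℝ ℝ hℱ (hZ.toLp Z))‖ ^ 2
        ≤ ‖hZ.toLp Z - hW'.toLp _‖ ^ 2 := pow_le_pow_left₀ (norm_nonneg _) hmin 2
      _ = variance (Z - W) P := by rw [hnormsq, hvar]
      _ ≤ ε := hWvar
  have hfg : hZ.toLp Z = ↑(condExpL2 ℝ ℝ hℱ (hZ.toLp Z)) := by
    have h0 : ‖hZ.toLp Z - ↑(condExpL2 ℝ ℝ hℱ (hZ.toLp Z))‖ = 0 := by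
      by_contra h
      have hpos : 0 < ‖hZ.toLp Z - ↑(condExpL2 ℝ ℝ hℱ (hZ.toLp Z))‖ ^ 2 := by positivity
      have := hkey _ (half_pos hpos)
      linarith
    rw [← sub_eq_zero]
    exact norm_eq_zero.mp h0
  have hZg : Z =ᵐ[P] ↑(condExpL2 ℝ ℝ hℱ (hZ.toLp Z)) := by
    refine (hZ.coeFn_toLp).symm.trans ?_
    conv_lhs => rw [hfg]
  have hgmeas : AEStronglyMeasurable[ℱ] Z P :=
    (aestronglyMeasurable_condExpL2 (𝕜 := ℝ) hℱ (hZ.toLp Z)).congr hZg.symm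
  exact (condExp_of_aestronglyMeasurable' hℱ hgmeas (hZ.integrable one_le_two)).symm
end
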